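/- arXiv:1209.6596 — 2 statements merged into one kernel-verified Lean document; each statement's English description precedes it below -/
import Mathlib

section
/- Define S_T^{(1)} := Σ_{k=0}^{T−1} X_k θ_{1,k}, where θ_{1,k} is the conditional mean number of type-2 daughters per type-1 mother in generation k. Assume E[ζ] = 0 and Var[ζ] ∈ (0,∞); that P[S_T > x] ~ K_0 / log x as x → ∞ for a constant K_0 > 0; that P[T > n] ~ c/√n as n → ∞; and that for some α > 0, P[θ_1 < 1/x] = o((log x)^{-3-α}), P[θ_1 > x] = o((log x)^{-3-α}) as x → ∞. Then P[S_T^{(1)} > x] ~ K_0 / log x as x → ∞. -/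
open MeasureTheory ProbabilityTheory Filter Real Set Asymptotics
open scoped Topology ENNReal

lemma measurable_tsum_of_nonneg {α ι : Type*} [MeasurableSpace α] [Countable ι]
    {f : ι → α → ℝ} (h : ∀ i, Measurable (f i)) (hnn : ∀ i a, 0 ≤ f i a) :
    Measurable (fun a => ∑' i, f i a) := by
  have key : ∀ a, (∑' i, f i a) = (∑' i, ENNReal.ofReal (f i a)).toReal := by
    intro a
    by_cases hs : Summable (fun i => f i a)
    · rw [← ENNReal.ofReal_tsum_of_nonneg (fun i => hnn i a) hs,
        ENNReal.toReal_ofReal (tsum_nonneg fun i => hnn i a)]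
    · rw [tsum_eq_zero_of_not_summable hs]
      have : (∑' i, ENNReal.ofReal (f i a)) = ⊤ := by
        by_contra hne
        apply hs
        have hsn : Summable (fun i => (f i a).toNNReal) := by
          rw [← ENNReal.tsum_coe_ne_top_iff_summable]
          exact hne
        have h2 : Summable (fun i => ((f i a).toNNReal : ℝ)) := NNReal.summable_coe.2 hsn
        refine h2.congr fun i => Real.coe_toNNReal _ (hnn i a)
      simp [this]
  simp only [key]
  exact (Measurable.ennreal_tsum fun i =>
    ENNReal.measurable_ofReal.comp (h i)).ennreal_toReal

lemma helper_mul_div' {a s L : ℝ} (hs : s ≠ 0) : (a * s) * (L / s) = a * L := by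
  field_simp

lemma helper_tail (q : ℝ → ℝ) (K0 : ℝ)
    (h : Tendsto (fun x => q x * Real.log x) atTop (𝓝 K0))
    (u : ℝ → ℝ) (hu : Tendsto (fun x => u x / Real.log x) atTop (𝓝 0)) :
    Tendsto (fun x => q (Real.exp (Real.log x + u x)) * Real.log x) atTop (𝓝 K0) := by
  set w : ℝ → ℝ := fun x => Real.log x + u x with hw_def
  have h2 : ∀ᶠ x in atTop, -(1/2 : ℝ) ≤ u x / Real.log x :=
    hu.eventually (eventually_ge_nhds (by norm_num))
  have h3 : ∀ᶠ x in atTop, (0:ℝ) < Real.log x :=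
    Real.tendsto_log_atTop.eventually_gt_atTop 0
  have hwge : ∀ᶠ x in atTop, Real.log x / 2 ≤ w x := by
    filter_upwards [h2, h3] with x h2x h3x
    have : -(1/2 : ℝ) * Real.log x ≤ u x := (le_div_iff₀ h3x).1 h2x
    simp only [hw_def]; linarith
  have hw : Tendsto w atTop atTop :=
    tendsto_atTop_mono' _ hwge (Real.tendsto_log_atTop.atTop_div_const (by norm_num))
  have h1 : Tendsto (fun x => q (Real.exp (w x)) * w x) atTop (𝓝 K0) := by
    have := h.comp (Real.tendsto_exp_atTop.comp hw)
    simpa [Function.comp_def, Real.log_exp] using this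
  have hinv : Tendsto (fun x => (1 + u x / Real.log x)⁻¹) atTop (𝓝 1) := by
    have := (tendsto_const_nhds.add hu :
      Tendsto (fun x => (1:ℝ) + u x / Real.log x) atTop (𝓝 (1+0))).inv₀ (by norm_num)
    simpa using this
  have hmul := h1.mul hinv
  rw [mul_one] at hmul
  refine hmul.congr' ?_
  filter_upwards [h3, hwge] with x h3x hwx
  have hwpos : 0 < w x := lt_of_lt_of_le (by linarith) hwx
  have hne : Real.log x ≠ 0 := ne_of_gt h3x
  have key : 1 + u x / Real.log x = w x / Real.log x := by
    field_simp [hw_def]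
    simp only [hw_def]
  rw [key, inv_div, helper_mul_div' (ne_of_gt hwpos)]

lemma helper_o (q : ℝ → ℝ) (hnn : ∀ y, 0 ≤ q y) (α : ℝ) (hα : 0 < α)
    (ho : q =o[atTop] fun y : ℝ => Real.log y ^ (-(3 + α))) :
    Tendsto (fun x : ℝ => ((⌈Real.log x ^ (2 + α/4)⌉₊ : ℕ) : ℝ) *
      q (Real.exp (Real.log x ^ ((3 + α/2)/(3 + α)))) * Real.log x) atTop (𝓝 0) := by
  set β : ℝ := (3 + α/2)/(3 + α) with hβ_def
  have hβpos : 0 < β := div_pos (by linarith) (by linarith)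
  have hβmul : β * (3 + α) = 3 + α/2 := by
    rw [hβ_def]; field_simp
  set lam : ℝ → ℝ := fun x => Real.exp (Real.log x ^ β) with hlam_def
  have hlam : Tendsto lam atTop atTop :=
    Real.tendsto_exp_atTop.comp ((tendsto_rpow_atTop hβpos).comp Real.tendsto_log_atTop)
  have hlog : ∀ᶠ x : ℝ in atTop, (1:ℝ) ≤ Real.log x :=
    Real.tendsto_log_atTop.eventually_ge_atTop 1
  have ho' : (fun x => q (lam x)) =o[atTop] fun x => Real.log x ^ (-(3 + α/2)) := by
    refine ((ho.comp_tendsto hlam).congr' (by rfl) ?_ : _)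
    filter_upwards [hlog] with x hx
    have h0 : (0:ℝ) ≤ Real.log x := by linarith
    simp only [Function.comp_def, hlam_def, Real.log_exp]
    rw [← Real.rpow_mul h0]
    congr 1
    rw [show β * -(3 + α) = -(β * (3 + α)) by ring, hβmul]
  have hdiv := ho'.tendsto_div_nhds_zero
  have hmul : Tendsto (fun x => q (lam x) * Real.log x ^ (3 + α/2)) atTop (𝓝 0) := by
    refine hdiv.congr' ?_
    filter_upwards [hlog] with x hx
    have h0 : (0:ℝ) ≤ Real.log x := by linarith
    rw [Real.rpow_neg h0, div_eq_mul_inv, inv_inv]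
  have hsmall : Tendsto (fun x : ℝ => Real.log x ^ (-(α/4))) atTop (𝓝 0) :=
    (tendsto_rpow_neg_atTop (by linarith)).comp Real.tendsto_log_atTop
  have hrhs : Tendsto (fun x : ℝ => 2 * Real.log x ^ (-(α/4)) *
      (q (lam x) * Real.log x ^ (3 + α/2))) atTop (𝓝 0) := by
    have := (hsmall.const_mul 2).mul hmul
    simpa using this
  refine squeeze_zero' ?_ ?_ hrhs
  · filter_upwards [hlog] with x hx
    have h0 : (0:ℝ) ≤ Real.log x := by linarith
    exact mul_nonneg (mul_nonneg (Nat.cast_nonneg _) (hnn _)) h0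
  · filter_upwards [hlog] with x hx
    have h1 : (0:ℝ) < Real.log x := by linarith
    have hge1 : (1:ℝ) ≤ Real.log x ^ (2 + α/4) := by
      calc (1:ℝ) = Real.log x ^ (0:ℝ) := (Real.rpow_zero _).symm
      _ ≤ Real.log x ^ (2 + α/4) := Real.rpow_le_rpow_of_exponent_le hx (by linarith)
    have hceil : ((⌈Real.log x ^ (2 + α/4)⌉₊ : ℕ) : ℝ) ≤ 2 * Real.log x ^ (2 + α/4) := by
      have := Nat.ceil_lt_add_one (show (0:ℝ) ≤ Real.log x ^ (2 + α/4) by positivity)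
      linarith
    have hqnn : 0 ≤ q (lam x) * Real.log x := mul_nonneg (hnn _) h1.le
    calc ((⌈Real.log x ^ (2 + α/4)⌉₊ : ℕ) : ℝ) * q (lam x) * Real.log x
        ≤ (2 * Real.log x ^ (2 + α/4)) * (q (lam x) * Real.log x) := by
          rw [mul_assoc]; exact mul_le_mul_of_nonneg_right hceil hqnn
      _ = 2 * Real.log x ^ (-(α/4)) * (q (lam x) * Real.log x ^ (3 + α/2)) := by
          have e1 : Real.log x ^ (2 + α/4) * Real.log x = Real.log x ^ (3 + α/4) := by
            nth_rewrite 2 [← Real.rpow_one (Real.log x)]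
            rw [← Real.rpow_add h1]; congr 1; ring
          have e2 : Real.log x ^ (-(α/4)) * Real.log x ^ (3 + α/2) = Real.log x ^ (3 + α/4) := by
            rw [← Real.rpow_add h1]; congr 1; ring
          calc (2 * Real.log x ^ (2 + α/4)) * (q (lam x) * Real.log x)
              = 2 * q (lam x) * (Real.log x ^ (2 + α/4) * Real.log x) := by ring
            _ = 2 * q (lam x) * (Real.log x ^ (-(α/4)) * Real.log x ^ (3 + α/2)) := by
                rw [e1, e2]
            _ = 2 * Real.log x ^ (-(α/4)) * (q (lam x) * Real.log x ^ (3 + α/2)) := by ring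

lemma helper_T (pT : ℕ → ℝ) (c : ℝ)
    (h : Tendsto (fun n : ℕ => pT n * Real.sqrt n) atTop (𝓝 c))
    (α : ℝ) (hα : 0 < α) :
    Tendsto (fun x : ℝ => pT ⌈Real.log x ^ (2 + α/4)⌉₊ * Real.log x) atTop (𝓝 0) := by
  have hn : Tendsto (fun x : ℝ => ⌈Real.log x ^ (2 + α/4)⌉₊) atTop atTop :=
    tendsto_nat_ceil_atTop.comp ((tendsto_rpow_atTop (by linarith)).comp Real.tendsto_log_atTop)
  have hB1 : Tendsto (fun x : ℝ => pT ⌈Real.log x ^ (2 + α/4)⌉₊ *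
      Real.sqrt (⌈Real.log x ^ (2 + α/4)⌉₊ : ℕ)) atTop (𝓝 c) := h.comp hn
  have hlog : ∀ᶠ x : ℝ in atTop, (1:ℝ) ≤ Real.log x :=
    Real.tendsto_log_atTop.eventually_ge_atTop 1
  have hratio : Tendsto (fun x : ℝ => Real.log x /
      Real.sqrt (⌈Real.log x ^ (2 + α/4)⌉₊ : ℕ)) atTop (𝓝 0) := by
    have hsmall : Tendsto (fun x : ℝ => Real.log x ^ (-(α/8))) atTop (𝓝 0) :=
      (tendsto_rpow_neg_atTop (by linarith)).comp Real.tendsto_log_atTop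
    refine squeeze_zero' ?_ ?_ hsmall
    · filter_upwards [hlog] with x hx
      exact div_nonneg (by linarith) (Real.sqrt_nonneg _)
    · filter_upwards [hlog] with x hx
      have h1 : (0:ℝ) < Real.log x := by linarith
      have hsq : Real.log x ^ ((1:ℝ) + α/8) ≤ Real.sqrt (⌈Real.log x ^ (2 + α/4)⌉₊ : ℕ) := by
        have h2 : Real.log x ^ (2 + α/4) ≤ ((⌈Real.log x ^ (2 + α/4)⌉₊ : ℕ) : ℝ) :=
          Nat.le_ceil _
        have h3 : Real.sqrt (Real.log x ^ (2 + α/4)) ≤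
            Real.sqrt (⌈Real.log x ^ (2 + α/4)⌉₊ : ℕ) := Real.sqrt_le_sqrt h2
        calc Real.log x ^ ((1:ℝ) + α/8) = Real.sqrt (Real.log x ^ (2 + α/4)) := by
              rw [Real.sqrt_eq_rpow, ← Real.rpow_mul h1.le]; congr 1; ring
          _ ≤ _ := h3
      have hpos : (0:ℝ) < Real.log x ^ ((1:ℝ) + α/8) := Real.rpow_pos_of_pos h1 _
      calc Real.log x / Real.sqrt (⌈Real.log x ^ (2 + α/4)⌉₊ : ℕ)
          ≤ Real.log x / Real.log x ^ ((1:ℝ) + α/8) :=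
            div_le_div_of_nonneg_left h1.le hpos hsq
        _ = Real.log x ^ (-(α/8)) := by
            nth_rewrite 1 [← Real.rpow_one (Real.log x)]
            rw [← Real.rpow_sub h1]; congr 1; ring
  have hfin := hB1.mul hratio
  rw [mul_zero] at hfin
  refine hfin.congr' ?_
  have hn1 : ∀ᶠ x : ℝ in atTop, 1 ≤ ⌈Real.log x ^ (2 + α/4)⌉₊ := hn.eventually_ge_atTop 1
  filter_upwards [hn1] with x hx
  have : Real.sqrt (⌈Real.log x ^ (2 + α/4)⌉₊ : ℕ) ≠ 0 := by
    refine ne_of_gt (Real.sqrt_pos.2 ?_)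
    exact_mod_cast Nat.lt_of_lt_of_le Nat.zero_lt_one hx
  exact helper_mul_div' this

lemma helper_measure {Ω : Type*} [MeasurableSpace Ω] (μ : Measure Ω) [IsFiniteMeasure μ]
    (A B C : Set Ω) (n : ℕ) (D : ℕ → Set Ω)
    (hincl : A ⊆ B ∪ (C ∪ ⋃ k ∈ Finset.range n, D k))
    (hD : ∀ k, μ (D k) = μ (D 0)) :
    (μ A).toReal ≤ (μ B).toReal + (μ C).toReal + n * (μ (D 0)).toReal := by
  have h1 : μ A ≤ μ B + μ C + (n : ℝ≥0∞) * μ (D 0) := by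
    calc μ A ≤ μ (B ∪ (C ∪ ⋃ k ∈ Finset.range n, D k)) := measure_mono hincl
      _ ≤ μ B + μ (C ∪ ⋃ k ∈ Finset.range n, D k) := measure_union_le _ _
      _ ≤ μ B + (μ C + μ (⋃ k ∈ Finset.range n, D k)) :=
          add_le_add le_rfl (measure_union_le _ _)
      _ ≤ μ B + (μ C + ∑ k ∈ Finset.range n, μ (D k)) :=
          add_le_add le_rfl (add_le_add le_rfl (measure_biUnion_finset_le _ _))
      _ = μ B + (μ C + (n : ℝ≥0∞) * μ (D 0)) := by
          rw [Finset.sum_congr rfl (fun k _ => hD k), Finset.sum_const, Finset.card_range,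
            nsmul_eq_mul]
      _ = μ B + μ C + (n : ℝ≥0∞) * μ (D 0) := (add_assoc _ _ _).symm
  have hne2 : (n : ℝ≥0∞) * μ (D 0) ≠ ⊤ :=
    ENNReal.mul_ne_top (ENNReal.natCast_ne_top n) (measure_ne_top _ _)
  have hne1 : μ B + μ C ≠ ⊤ := ENNReal.add_ne_top.2 ⟨measure_ne_top _ _, measure_ne_top _ _⟩
  calc (μ A).toReal ≤ (μ B + μ C + (n : ℝ≥0∞) * μ (D 0)).toReal :=
      ENNReal.toReal_mono (ENNReal.add_ne_top.2 ⟨hne1, hne2⟩) h1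
    _ = (μ B).toReal + (μ C).toReal + (n : ℝ) * (μ (D 0)).toReal := by
        rw [ENNReal.toReal_add hne1 hne2, ENNReal.toReal_add (measure_ne_top _ _)
          (measure_ne_top _ _), ENNReal.toReal_mul, ENNReal.toReal_natCast]

/-- **Lemma 2, first part.** In the IID-environment setting, let
`S_T^{(1)} := Σ_{k<T} X_k θ_{1,k}`. If `E[ζ] = 0`, `Var ζ ∈ (0,∞)`,
`P[S_T > x] ~ K₀/log x` with `K₀ > 0`, `P[T > n] ~ c/√n`, and for some `α > 0`
`P[θ₁ < 1/x] = o((log x)^{-3-α})` and `P[θ₁ > x] = o((log x)^{-3-α})`,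
then `P[S_T^{(1)} > x] ~ K₀/log x` as `x → ∞`. -/
theorem weighted_total_progeny_tail
    {Ω : Type*} [MeasurableSpace Ω] (μ : Measure Ω) [IsProbabilityMeasure μ]
    {E : Type*} [MeasurableSpace E]
    -- IID environment
    (e : ℕ → Ω → E) (hemeas : ∀ n, Measurable (e n))
    (hiid : iIndepFun e μ)
    (hident : ∀ n, μ.map (e n) = μ.map (e 0))
    -- conditional offspring distribution of type-1 particles and its moments
    (p : E → ℕ × ℕ → ℝ) (hp0 : ∀ a ij, 0 ≤ p a ij) (hp1 : ∀ a, (∑' ij : ℕ × ℕ, p a ij) = 1)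
    (hpmeas : ∀ ij, Measurable fun a => p a ij)
    (M1 Θ1 : E → ℝ)
    (hM1 : ∀ a, M1 a = ∑' ij : ℕ × ℕ, (ij.1 : ℝ) * p a ij)
    (hΘ1 : ∀ a, Θ1 a = ∑' ij : ℕ × ℕ, (ij.2 : ℝ) * p a ij)
    -- the type-1 population process
    (X : ℕ → Ω → ℕ) (hXmeas : ∀ n, Measurable (X n)) (hX0 : ∀ ω, X 0 ω = 1)
    (T : Ω → ℕ) (hT : ∀ ω, T ω = sInf {n | X n ω = 0})
    (S : Ω → ℕ) (hS : ∀ ω, S ω = ∑ k ∈ Finset.range (T ω), X k ω)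
    (S1 : Ω → ℝ) (hS1 : ∀ ω, S1 ω = ∑ k ∈ Finset.range (T ω), (X k ω : ℝ) * Θ1 (e k ω))
    -- criticality: `E[ζ] = 0`, `Var ζ ∈ (0,∞)`
    (hζint : Integrable (fun ω => Real.log (M1 (e 0 ω))) μ)
    (hζmean : (∫ ω, Real.log (M1 (e 0 ω)) ∂μ) = 0)
    (hζvar : evariance (fun ω => Real.log (M1 (e 0 ω))) μ ∈ Set.Ioo 0 ⊤)
    -- `P[S_T > x] ~ K₀ / log x`
    (K0 : ℝ) (hK0 : 0 < K0)
    (hStail : Tendsto (fun x : ℝ => (μ {ω | x < (S ω : ℝ)}).toReal * Real.log x)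
      atTop (𝓝 K0))
    -- `P[T > n] ~ c / √n`
    (c : ℝ) (hc : 0 < c)
    (hTtail : Tendsto (fun n : ℕ => (μ {ω | n < T ω}).toReal * Real.sqrt n) atTop (𝓝 c))
    -- tail conditions on `θ₁`, for some `α > 0`
    (α : ℝ) (hα : 0 < α)
    (hc0 : (fun x : ℝ => (μ {ω | Θ1 (e 0 ω) < 1 / x}).toReal)
      =o[atTop] fun x : ℝ => Real.log x ^ (-(3 + α)))
    (hAstheta : (fun x : ℝ => (μ {ω | x < Θ1 (e 0 ω)}).toReal)
      =o[atTop] fun x : ℝ => Real.log x ^ (-(3 + α))) :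
    Tendsto (fun x : ℝ => (μ {ω | x < S1 ω}).toReal * Real.log x) atTop (𝓝 K0) := by
  -- measurability of Θ1
  have hΘmeas : Measurable Θ1 := by
    have hm : Measurable fun a => ∑' ij : ℕ × ℕ, (ij.2 : ℝ) * p a ij :=
      measurable_tsum_of_nonneg (fun ij => (hpmeas ij).const_mul _)
        (fun ij a => mul_nonneg (Nat.cast_nonneg _) (hp0 a ij))
    exact (funext hΘ1 : Θ1 = _) ▸ hm
  -- identical distribution transfer
  have keyGT : ∀ (k : ℕ) (y : ℝ), μ {ω | y < Θ1 (e k ω)} = μ {ω | y < Θ1 (e 0 ω)} := by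
    intro k y
    have hA : MeasurableSet {a : E | y < Θ1 a} := measurableSet_lt measurable_const hΘmeas
    have h1 : {ω | y < Θ1 (e k ω)} = e k ⁻¹' {a | y < Θ1 a} := rfl
    have h2 : {ω | y < Θ1 (e 0 ω)} = e 0 ⁻¹' {a | y < Θ1 a} := rfl
    rw [h1, h2, ← Measure.map_apply (hemeas k) hA, ← Measure.map_apply (hemeas 0) hA, hident k]
  have keyLT : ∀ (k : ℕ) (y : ℝ), μ {ω | Θ1 (e k ω) < y} = μ {ω | Θ1 (e 0 ω) < y} := by
    intro k y
    have hA : MeasurableSet {a : E | Θ1 a < y} := measurableSet_lt hΘmeas measurable_const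
    have h1 : {ω | Θ1 (e k ω) < y} = e k ⁻¹' {a | Θ1 a < y} := rfl
    have h2 : {ω | Θ1 (e 0 ω) < y} = e 0 ⁻¹' {a | Θ1 a < y} := rfl
    rw [h1, h2, ← Measure.map_apply (hemeas k) hA, ← Measure.map_apply (hemeas 0) hA, hident k]
  -- basic facts about β
  have hβpos : 0 < (3 + α/2)/(3 + α) := div_pos (by linarith) (by linarith)
  have hβlt1 : (3 + α/2)/(3 + α) < 1 := (div_lt_one (by linarith)).2 (by linarith)
  -- the ratio `log x ^ β / log x → 0`
  have hu0 : Tendsto (fun x : ℝ => Real.log x ^ ((3 + α/2)/(3 + α)) / Real.log x)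
      atTop (𝓝 0) := by
    have h1 : (0:ℝ) < 1 - (3 + α/2)/(3 + α) := by linarith
    have h2 := (tendsto_rpow_neg_atTop h1).comp Real.tendsto_log_atTop
    refine h2.congr' ?_
    filter_upwards [Real.tendsto_log_atTop.eventually_gt_atTop 0] with x hx
    simp only [Function.comp_def]
    rw [show -(1 - (3 + α/2)/(3 + α)) = (3 + α/2)/(3 + α) - 1 by ring,
      Real.rpow_sub hx, Real.rpow_one]
  -- the four asymptotic ingredients
  have hAup := helper_tail (fun y : ℝ => (μ {ω | y < (S ω : ℝ)}).toReal) K0 hStail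
    (fun x => -(Real.log x ^ ((3 + α/2)/(3 + α)))) (by simpa [neg_div] using hu0.neg)
  have hAlo := helper_tail (fun y : ℝ => (μ {ω | y < (S ω : ℝ)}).toReal) K0 hStail
    (fun x => Real.log x ^ ((3 + α/2)/(3 + α))) hu0
  have hB := helper_T (fun n : ℕ => (μ {ω | n < T ω}).toReal) c hTtail α hα
  have hChi := helper_o (fun y : ℝ => (μ {ω | y < Θ1 (e 0 ω)}).toReal)
    (fun y => ENNReal.toReal_nonneg) α hα hAstheta
  have hClo := helper_o (fun y : ℝ => (μ {ω | Θ1 (e 0 ω) < 1 / y}).toReal)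
    (fun y => ENNReal.toReal_nonneg) α hα hc0
  -- the upper measure bound
  have hub : ∀ x : ℝ, 0 < x →
      (μ {ω | x < S1 ω}).toReal ≤
        (μ {ω | Real.exp (Real.log x + -(Real.log x ^ ((3 + α/2)/(3 + α)))) < (S ω : ℝ)}).toReal
        + (μ {ω | ⌈Real.log x ^ (2 + α/4)⌉₊ < T ω}).toReal
        + ((⌈Real.log x ^ (2 + α/4)⌉₊ : ℕ) : ℝ) *
          (μ {ω | Real.exp (Real.log x ^ ((3 + α/2)/(3 + α))) < Θ1 (e 0 ω)}).toReal := by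
    intro x hx
    refine helper_measure μ _ _ _ _
      (fun k => {ω | Real.exp (Real.log x ^ ((3 + α/2)/(3 + α))) < Θ1 (e k ω)})
      ?_ (fun k => keyGT k _)
    intro ω hω
    simp only [Set.mem_setOf_eq] at hω
    by_contra hcon
    simp only [Set.mem_union, Set.mem_setOf_eq, Set.mem_iUnion, Finset.mem_range] at hcon
    push_neg at hcon
    obtain ⟨h1, h2, h3⟩ := hcon
    have hle : S1 ω ≤ x := by
      rw [hS1 ω]
      have hS' : ∑ k ∈ Finset.range (T ω), (X k ω : ℝ) = (S ω : ℝ) := by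
        rw [hS ω]; push_cast; ring
      calc ∑ k ∈ Finset.range (T ω), (X k ω : ℝ) * Θ1 (e k ω)
          ≤ ∑ k ∈ Finset.range (T ω),
              (X k ω : ℝ) * Real.exp (Real.log x ^ ((3 + α/2)/(3 + α))) := by
            refine Finset.sum_le_sum fun k hk => ?_
            exact mul_le_mul_of_nonneg_left
              (h3 k (lt_of_lt_of_le (Finset.mem_range.1 hk) h2)) (Nat.cast_nonneg _)
        _ = (S ω : ℝ) * Real.exp (Real.log x ^ ((3 + α/2)/(3 + α))) := by
            rw [← Finset.sum_mul, hS']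
        _ ≤ Real.exp (Real.log x + -(Real.log x ^ ((3 + α/2)/(3 + α)))) *
              Real.exp (Real.log x ^ ((3 + α/2)/(3 + α))) :=
            mul_le_mul_of_nonneg_right h1 (Real.exp_pos _).le
        _ = x := by
            rw [← Real.exp_add,
              show Real.log x + -(Real.log x ^ ((3 + α/2)/(3 + α)))
                + Real.log x ^ ((3 + α/2)/(3 + α)) = Real.log x by ring,
              Real.exp_log hx]
    exact absurd hω (not_lt.2 hle)
  -- the lower measure bound
  have hlb : ∀ x : ℝ, 0 < x →
      (μ {ω | Real.exp (Real.log x + Real.log x ^ ((3 + α/2)/(3 + α))) < (S ω : ℝ)}).toReal ≤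
        (μ {ω | x < S1 ω}).toReal
        + (μ {ω | ⌈Real.log x ^ (2 + α/4)⌉₊ < T ω}).toReal
        + ((⌈Real.log x ^ (2 + α/4)⌉₊ : ℕ) : ℝ) *
          (μ {ω | Θ1 (e 0 ω) < 1 / Real.exp (Real.log x ^ ((3 + α/2)/(3 + α)))}).toReal := by
    intro x hx
    refine helper_measure μ _ _ _ _
      (fun k => {ω | Θ1 (e k ω) < 1 / Real.exp (Real.log x ^ ((3 + α/2)/(3 + α)))})
      ?_ (fun k => keyLT k _)
    intro ω hω
    simp only [Set.mem_setOf_eq] at hω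
    by_contra hcon
    simp only [Set.mem_union, Set.mem_setOf_eq, Set.mem_iUnion, Finset.mem_range] at hcon
    push_neg at hcon
    obtain ⟨h1, h2, h3⟩ := hcon
    have hlampos : (0:ℝ) < Real.exp (Real.log x ^ ((3 + α/2)/(3 + α))) := Real.exp_pos _
    have hSle : (S ω : ℝ) ≤ Real.exp (Real.log x ^ ((3 + α/2)/(3 + α))) * S1 ω := by
      rw [hS1 ω, hS ω]
      push_cast
      rw [Finset.mul_sum]
      refine Finset.sum_le_sum fun k hk => ?_
      have hk' := h3 k (lt_of_lt_of_le (Finset.mem_range.1 hk) h2)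
      have h1lam : 1 ≤ Real.exp (Real.log x ^ ((3 + α/2)/(3 + α))) * Θ1 (e k ω) := by
        have := mul_le_mul_of_nonneg_left hk' hlampos.le
        rwa [mul_one_div_cancel (ne_of_gt hlampos)] at this
      calc (X k ω : ℝ) = (X k ω : ℝ) * 1 := (mul_one _).symm
        _ ≤ (X k ω : ℝ) * (Real.exp (Real.log x ^ ((3 + α/2)/(3 + α))) * Θ1 (e k ω)) :=
            mul_le_mul_of_nonneg_left h1lam (Nat.cast_nonneg _)
        _ = Real.exp (Real.log x ^ ((3 + α/2)/(3 + α))) * ((X k ω : ℝ) * Θ1 (e k ω)) := by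
            ring
    have hfinal : (S ω : ℝ) ≤
        Real.exp (Real.log x + Real.log x ^ ((3 + α/2)/(3 + α))) := by
      calc (S ω : ℝ) ≤ Real.exp (Real.log x ^ ((3 + α/2)/(3 + α))) * S1 ω := hSle
        _ ≤ Real.exp (Real.log x ^ ((3 + α/2)/(3 + α))) * x :=
            mul_le_mul_of_nonneg_left h1 hlampos.le
        _ = Real.exp (Real.log x + Real.log x ^ ((3 + α/2)/(3 + α))) := by
            rw [Real.exp_add, Real.exp_log hx]
            exact mul_comm _ _
    exact absurd hω (not_lt.2 hfinal)
  -- final squeeze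
  refine tendsto_of_tendsto_of_tendsto_of_le_of_le'
    (g := fun x : ℝ =>
      (μ {ω | Real.exp (Real.log x + Real.log x ^ ((3 + α/2)/(3 + α))) < (S ω : ℝ)}).toReal
        * Real.log x
      - (μ {ω | ⌈Real.log x ^ (2 + α/4)⌉₊ < T ω}).toReal * Real.log x
      - ((⌈Real.log x ^ (2 + α/4)⌉₊ : ℕ) : ℝ) *
          (μ {ω | Θ1 (e 0 ω) < 1 / Real.exp (Real.log x ^ ((3 + α/2)/(3 + α)))}).toReal
          * Real.log x)
    (h := fun x : ℝ =>
      (μ {ω | Real.exp (Real.log x + -(Real.log x ^ ((3 + α/2)/(3 + α)))) < (S ω : ℝ)}).toReal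
        * Real.log x
      + (μ {ω | ⌈Real.log x ^ (2 + α/4)⌉₊ < T ω}).toReal * Real.log x
      + ((⌈Real.log x ^ (2 + α/4)⌉₊ : ℕ) : ℝ) *
          (μ {ω | Real.exp (Real.log x ^ ((3 + α/2)/(3 + α))) < Θ1 (e 0 ω)}).toReal
          * Real.log x)
    ?_ ?_ ?_ ?_
  · have := (hAlo.sub hB).sub hClo
    simpa using this
  · have := (hAup.add hB).add hChi
    simpa using this
  · filter_upwards [eventually_ge_atTop (1:ℝ)] with x hx1
    have hx : (0:ℝ) < x := lt_of_lt_of_le one_pos hx1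
    have hlognn : (0:ℝ) ≤ Real.log x := Real.log_nonneg hx1
    have h := hlb x hx
    have h3 := mul_le_mul_of_nonneg_right
      (show (μ {ω | Real.exp (Real.log x + Real.log x ^ ((3 + α/2)/(3 + α))) <
          (S ω : ℝ)}).toReal
        - (μ {ω | ⌈Real.log x ^ (2 + α/4)⌉₊ < T ω}).toReal
        - ((⌈Real.log x ^ (2 + α/4)⌉₊ : ℕ) : ℝ) *
          (μ {ω | Θ1 (e 0 ω) < 1 / Real.exp (Real.log x ^ ((3 + α/2)/(3 + α)))}).toReal
        ≤ (μ {ω | x < S1 ω}).toReal by linarith) hlognn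
    calc _ = ((μ {ω | Real.exp (Real.log x + Real.log x ^ ((3 + α/2)/(3 + α))) <
          (S ω : ℝ)}).toReal
        - (μ {ω | ⌈Real.log x ^ (2 + α/4)⌉₊ < T ω}).toReal
        - ((⌈Real.log x ^ (2 + α/4)⌉₊ : ℕ) : ℝ) *
          (μ {ω | Θ1 (e 0 ω) < 1 / Real.exp (Real.log x ^ ((3 + α/2)/(3 + α)))}).toReal)
          * Real.log x := by ring
      _ ≤ _ := h3
  · filter_upwards [eventually_ge_atTop (1:ℝ)] with x hx1
    have hx : (0:ℝ) < x := lt_of_lt_of_le one_pos hx1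
    have hlognn : (0:ℝ) ≤ Real.log x := Real.log_nonneg hx1
    have h := hub x hx
    have h3 := mul_le_mul_of_nonneg_right h hlognn
    calc _ ≤ _ := h3
      _ = _ := by ring
end

section
/- Let Y be a nonnegative random variable such that P[Y > x] ~ K / log x as x → ∞ for some constant K > 0. Then E[1 − e^{−λY}] ~ K / log(1/λ) as λ → 0⁺. -/
open MeasureTheory Filter Real Set
open scoped Topology ENNReal

lemma tsv_integrable {Ω : Type*} [MeasurableSpace Ω] (μ : Measure Ω) [IsProbabilityMeasure μ]
    (Y : Ω → ℝ) (hYmeas : Measurable Y) (hYnonneg : ∀ ω, 0 ≤ Y ω) (l : ℝ) (hl : 0 ≤ l) :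
    Integrable (fun ω => 1 - Real.exp (-l * Y ω)) μ := by
  apply Integrable.mono' (integrable_const (1:ℝ))
  · exact (measurable_const.sub ((hYmeas.const_mul (-l)).exp)).aestronglyMeasurable
  · refine ae_of_all _ fun ω => ?_
    have h1 : Real.exp (-l * Y ω) ≤ 1 := Real.exp_le_one_iff.mpr (by nlinarith [hYnonneg ω])
    have h2 : 0 < Real.exp (-l * Y ω) := Real.exp_pos _
    rw [Real.norm_eq_abs, abs_le]; constructor <;> nlinarith

lemma tsv_lower {Ω : Type*} [MeasurableSpace Ω] (μ : Measure Ω) [IsProbabilityMeasure μ]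
    (Y : Ω → ℝ) (hYmeas : Measurable Y) (hYnonneg : ∀ ω, 0 ≤ Y ω) (l x : ℝ) (hl : 0 ≤ l) :
    (1 - Real.exp (-l * x)) * (μ {ω | x < Y ω}).toReal
      ≤ ∫ ω, (1 - Real.exp (-l * Y ω)) ∂μ := by
  have hS : MeasurableSet {ω | x < Y ω} := measurableSet_lt measurable_const hYmeas
  have hind := integral_indicator_const ((1:ℝ) - Real.exp (-l * x)) hS (μ := μ)
  rw [smul_eq_mul, measureReal_def] at hind
  rw [mul_comm, ← hind]
  apply integral_mono ((integrable_const _).indicator hS)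
    (tsv_integrable μ Y hYmeas hYnonneg l hl)
  intro ω
  simp only
  by_cases hω : ω ∈ {ω | x < Y ω}
  · rw [Set.indicator_of_mem hω]
    have hxY : x < Y ω := hω
    have : Real.exp (-l * Y ω) ≤ Real.exp (-l * x) :=
      Real.exp_le_exp.mpr (by nlinarith)
    linarith
  · rw [Set.indicator_of_notMem hω]
    have : Real.exp (-l * Y ω) ≤ 1 := Real.exp_le_one_iff.mpr (by nlinarith [hYnonneg ω])
    linarith

lemma tsv_upper {Ω : Type*} [MeasurableSpace Ω] (μ : Measure Ω) [IsProbabilityMeasure μ]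
    (Y : Ω → ℝ) (hYmeas : Measurable Y) (hYnonneg : ∀ ω, 0 ≤ Y ω) (l x : ℝ)
    (hl : 0 ≤ l) (hx : 0 ≤ x) :
    (∫ ω, (1 - Real.exp (-l * Y ω)) ∂μ) ≤ (μ {ω | x < Y ω}).toReal + l * x := by
  have hS : MeasurableSet {ω | x < Y ω} := measurableSet_lt measurable_const hYmeas
  have hind := integral_indicator_const ((1:ℝ)) hS (μ := μ)
  rw [smul_eq_mul, mul_one, measureReal_def] at hind
  have hconst : (∫ _ : Ω, l * x ∂μ) = l * x := by
    simp [integral_const]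
  calc (∫ ω, (1 - Real.exp (-l * Y ω)) ∂μ)
      ≤ ∫ ω, ({ω | x < Y ω}.indicator (fun _ => (1:ℝ)) ω + l * x) ∂μ := by
        apply integral_mono (tsv_integrable μ Y hYmeas hYnonneg l hl)
          (((integrable_const _).indicator hS).add (integrable_const _))
        intro ω
        simp only [Pi.add_apply]
        by_cases hω : ω ∈ {ω | x < Y ω}
        · rw [Set.indicator_of_mem hω]
          have := Real.exp_pos (-l * Y ω)
          have : 0 ≤ l * x := mul_nonneg hl hx
          linarith [Real.exp_pos (-l * Y ω)]
        · rw [Set.indicator_of_notMem hω]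
          have hYx : Y ω ≤ x := not_lt.mp hω
          have h1 := Real.add_one_le_exp (-l * Y ω)
          have h2 : l * Y ω ≤ l * x := mul_le_mul_of_nonneg_left hYx hl
          linarith
    _ = (μ {ω | x < Y ω}).toReal + l * x := by
        rw [integral_add ((integrable_const _).indicator hS) (integrable_const _), hind, hconst]

/-- If `Y ≥ 0` has tail `P[Y > x] ~ K / log x` as `x → ∞` (with `K > 0`),
then `E[1 - e^{-λ Y}] ~ K / log (1/λ)` as `λ → 0⁺`. -/
theorem tauberian_slowly_varying_tail
    {Ω : Type*} [MeasurableSpace Ω] (μ : Measure Ω) [IsProbabilityMeasure μ]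
    (Y : Ω → ℝ) (hYmeas : Measurable Y) (hYnonneg : ∀ ω, 0 ≤ Y ω)
    (K : ℝ) (hK : 0 < K)
    (htail : Tendsto (fun x : ℝ => (μ {ω | x < Y ω}).toReal * Real.log x) atTop (𝓝 K)) :
    Tendsto (fun l : ℝ => (∫ ω, (1 - Real.exp (-l * Y ω)) ∂μ) * Real.log (1 / l))
      (𝓝[>] 0) (𝓝 K) := by
  have hinv : Tendsto (fun l : ℝ => 1 / l) (𝓝[>] (0:ℝ)) atTop := by
    simpa [one_div] using (tendsto_inv_nhdsGT_zero : Tendsto (fun x : ℝ => x⁻¹) (𝓝[>] 0) atTop)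
  rw [Metric.tendsto_nhds]
  intro ε hε
  -- choose α
  set α : ℝ := K / (K + ε / 2) with hα_def
  have hα0 : 0 < α := div_pos hK (by linarith)
  have hα1 : α < 1 := (div_lt_one (by linarith)).2 (by linarith)
  have hKα : K * α⁻¹ = K + ε / 2 := by
    rw [hα_def, inv_div]
    field_simp
  -- choose A
  obtain ⟨A, hA2, hA1⟩ : ∃ A : ℝ, K - ε / 2 < (1 - Real.exp (-A)) * K ∧ 0 < A := by
    have hexp : Tendsto (fun A : ℝ => (1 - Real.exp (-A)) * K) atTop (𝓝 ((1 - 0) * K)) :=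
      (tendsto_const_nhds.sub (Real.tendsto_exp_atBot.comp tendsto_neg_atTop_atBot)).mul_const K
    exact ((hexp.eventually (eventually_gt_nhds (by linarith))).and
      (eventually_gt_atTop 0)).exists
  -- lower bound limit
  have hcompA : Tendsto (fun l : ℝ => A / l) (𝓝[>] (0:ℝ)) atTop := by
    simpa [div_eq_mul_inv, one_div] using hinv.const_mul_atTop hA1
  have hTA : Tendsto (fun l : ℝ => (μ {ω | A / l < Y ω}).toReal * Real.log (A / l))
      (𝓝[>] (0:ℝ)) (𝓝 K) := htail.comp hcompA
  have hlogA : Tendsto (fun l : ℝ => Real.log (A / l)) (𝓝[>] (0:ℝ)) atTop :=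
    Real.tendsto_log_atTop.comp hcompA
  have hP0 : Tendsto (fun l : ℝ => (μ {ω | A / l < Y ω}).toReal) (𝓝[>] (0:ℝ)) (𝓝 0) := by
    have hdiv := hTA.div_atTop hlogA
    apply hdiv.congr'
    filter_upwards [hlogA.eventually (eventually_gt_atTop 1)] with l hl
    field_simp
  have hg0 : Tendsto (fun l : ℝ => (μ {ω | A / l < Y ω}).toReal * Real.log (1 / l))
      (𝓝[>] (0:ℝ)) (𝓝 K) := by
    have : Tendsto (fun l : ℝ => (μ {ω | A / l < Y ω}).toReal * Real.log (A / l)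
        - (μ {ω | A / l < Y ω}).toReal * Real.log A) (𝓝[>] (0:ℝ)) (𝓝 (K - 0 * Real.log A)) :=
      hTA.sub (hP0.mul_const _)
    rw [zero_mul, sub_zero] at this
    apply this.congr'
    filter_upwards [self_mem_nhdsWithin] with l hl
    have hl0 : (0:ℝ) < l := hl
    rw [Real.log_div hA1.ne' hl0.ne', Real.log_div one_ne_zero hl0.ne', Real.log_one]
    ring
  have hlow : Tendsto (fun l : ℝ => (1 - Real.exp (-A)) *
      ((μ {ω | A / l < Y ω}).toReal * Real.log (1 / l))) (𝓝[>] (0:ℝ))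
      (𝓝 ((1 - Real.exp (-A)) * K)) := hg0.const_mul _
  -- upper bound limit
  have hxu : Tendsto (fun l : ℝ => (1 / l) ^ α) (𝓝[>] (0:ℝ)) atTop :=
    (tendsto_rpow_atTop hα0).comp hinv
  have hTU : Tendsto (fun l : ℝ => ((μ {ω | (1 / l) ^ α < Y ω}).toReal
      * Real.log ((1 / l) ^ α)) * α⁻¹) (𝓝[>] (0:ℝ)) (𝓝 (K * α⁻¹)) :=
    (htail.comp hxu).mul_const _
  have hm : Tendsto (fun l : ℝ => l * (1 / l) ^ α * Real.log (1 / l)) (𝓝[>] (0:ℝ)) (𝓝 0) := by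
    have h0 : Tendsto (fun t : ℝ => Real.log t / t ^ (1 - α)) atTop (𝓝 0) :=
      (isLittleO_log_rpow_atTop (by linarith)).tendsto_div_nhds_zero
    apply (h0.comp hinv).congr'
    filter_upwards [self_mem_nhdsWithin] with l hl
    have hl0 : (0:ℝ) < l := hl
    have hinvpos : (0:ℝ) < 1 / l := by positivity
    have h1 : (1 / l) ^ (1 - α) = (1 / l) * ((1 / l) ^ α)⁻¹ := by
      rw [Real.rpow_sub hinvpos, Real.rpow_one]
      ring
    have hpow : (0:ℝ) < (1 / l) ^ α := Real.rpow_pos_of_pos hinvpos _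
    simp only [Function.comp]
    rw [h1]
    field_simp
  have hup : Tendsto (fun l : ℝ => ((μ {ω | (1 / l) ^ α < Y ω}).toReal
      * Real.log ((1 / l) ^ α)) * α⁻¹ + l * (1 / l) ^ α * Real.log (1 / l)) (𝓝[>] (0:ℝ))
      (𝓝 (K * α⁻¹ + 0)) := hTU.add hm
  rw [add_zero, hKα] at hup
  -- assembly
  filter_upwards [Ioo_mem_nhdsGT_of_mem (by simp : (0:ℝ) ∈ Ico (0:ℝ) 1),
    hlow.eventually (eventually_gt_nhds (by linarith : K - ε < (1 - Real.exp (-A)) * K)),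
    hup.eventually (eventually_lt_nhds (by linarith : K + ε / 2 < K + ε))] with l hl hlo hu
  have hl0 : (0:ℝ) < l := hl.1
  have hl1 : l < 1 := hl.2
  have hlog_nonneg : 0 ≤ Real.log (1 / l) :=
    Real.log_nonneg (by rw [le_div_iff₀ hl0]; linarith)
  set F := ∫ ω, (1 - Real.exp (-l * Y ω)) ∂μ with hF
  -- lower chain
  have hlowF : (1 - Real.exp (-A)) * ((μ {ω | A / l < Y ω}).toReal * Real.log (1 / l))
      ≤ F * Real.log (1 / l) := by
    have h1 := tsv_lower μ Y hYmeas hYnonneg l (A / l) hl0.le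
    rw [show -l * (A / l) = -A by field_simp] at h1
    calc (1 - Real.exp (-A)) * ((μ {ω | A / l < Y ω}).toReal * Real.log (1 / l))
        = ((1 - Real.exp (-A)) * (μ {ω | A / l < Y ω}).toReal) * Real.log (1 / l) := by ring
      _ ≤ F * Real.log (1 / l) := mul_le_mul_of_nonneg_right h1 hlog_nonneg
  -- upper chain
  have hupF : F * Real.log (1 / l) ≤ ((μ {ω | (1 / l) ^ α < Y ω}).toReal
      * Real.log ((1 / l) ^ α)) * α⁻¹ + l * (1 / l) ^ α * Real.log (1 / l) := by
    have hinvpos : (0:ℝ) < 1 / l := by positivity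
    have hxpos : (0:ℝ) < (1 / l) ^ α := Real.rpow_pos_of_pos hinvpos _
    have h1 := tsv_upper μ Y hYmeas hYnonneg l ((1 / l) ^ α) hl0.le hxpos.le
    have h2 : F * Real.log (1 / l)
        ≤ ((μ {ω | (1 / l) ^ α < Y ω}).toReal + l * (1 / l) ^ α) * Real.log (1 / l) :=
      mul_le_mul_of_nonneg_right h1 hlog_nonneg
    have h3 : Real.log ((1 / l) ^ α) = α * Real.log (1 / l) := Real.log_rpow hinvpos _
    rw [h3]
    calc F * Real.log (1 / l)
        ≤ ((μ {ω | (1 / l) ^ α < Y ω}).toReal + l * (1 / l) ^ α) * Real.log (1 / l) := h2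
      _ = ((μ {ω | (1 / l) ^ α < Y ω}).toReal * (α * Real.log (1 / l))) * α⁻¹
          + l * (1 / l) ^ α * Real.log (1 / l) := by
          field_simp
  rw [Real.dist_eq, abs_sub_lt_iff]
  constructor <;> [skip; skip] <;> linarith
end
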